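/- Under the hypotheses of the critical iteration lemma applied to g_N with γ_N ∈ (0,1), g_N'(γ_N) = 1 and b_N = g_N''(γ_N) ∈ (0,∞), one has (γ_N − γ_{N,t})/γ_N ~ 2/(γ_N b_N t) as t → ∞, where γ_{N,t} is the t-th iterate of g_N at 0. -/

import Mathlib

open Filter

/-- Critical survival asymptotics: with `γ_{N,t} = g^[t](0)`, `g'(γ) = 1` and
`b = g''(γ) ∈ (0,∞)` at the least fixed point `γ ∈ (0,1)`,
`(γ - γ_{N,t})/γ ~ 2/(γ b t)`, i.e. `t (γ - γ_{N,t})/γ → 2/(γ b)`. -/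
theorem critical_survival (g : ℝ → ℝ)
    (hanal : AnalyticOn ℝ g (Metric.ball (0:ℝ) 1))
    (hmono : StrictMonoOn g (Set.Icc 0 1)) (h1 : g 1 = 1) (h0 : 0 < g 0)
    (γ : ℝ) (hγ : γ ∈ Set.Ioo (0:ℝ) 1) (hfix : g γ = γ)
    (hleast : ∀ s ∈ Set.Icc (0:ℝ) 1, g s = s → γ ≤ s)
    (hd : deriv g γ = 1) (hb : 0 < deriv (deriv g) γ) :
    Tendsto (fun t : ℕ => (t : ℝ) * (γ - g^[t] 0) / γ) atTop
      (nhds (2 / (γ * deriv (deriv g) γ))) := by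
  obtain ⟨hγ0, hγ1⟩ := hγ
  set b := deriv (deriv g) γ with hbdef
  have hopen : IsOpen (Metric.ball (0:ℝ) 1) := Metric.isOpen_ball
  have hanal' : AnalyticOnNhd ℝ g (Metric.ball (0:ℝ) 1) :=
    (hopen.analyticOn_iff_analyticOnNhd.mp hanal)
  have hmem : ∀ x : ℝ, 0 ≤ x → x ≤ γ → x ∈ Metric.ball (0:ℝ) 1 := by
    intro x hx1 hx2
    simp only [Metric.mem_ball, Real.dist_eq, sub_zero, abs_lt]
    constructor <;> linarith
  have hγball : γ ∈ Metric.ball (0:ℝ) 1 := hmem γ hγ0.le le_rfl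
  have hcont : ∀ x : ℝ, 0 ≤ x → x ≤ γ → ContinuousAt g x := fun x h1' h2' =>
    (hanal' x (hmem x h1' h2')).continuousAt
  -- step lemma : for 0 ≤ x < γ, x < g x and g x < γ
  have hstep : ∀ x : ℝ, 0 ≤ x → x < γ → x < g x ∧ g x < γ := by
    intro x hx0 hxγ
    have hgx : g x < γ := by
      have := hmono (Set.mem_Icc.2 ⟨hx0, by linarith⟩) (Set.mem_Icc.2 ⟨hγ0.le, hγ1.le⟩) hxγ
      rwa [hfix] at this
    refine ⟨?_, hgx⟩
    by_contra hle
    push_neg at hle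
    -- g x ≤ x : IVT gives a fixed point in [0, x], contradicting least
    have hcφ : ContinuousOn (fun y => g y - y) (Set.Icc 0 x) := by
      intro y hy
      exact ((hcont y hy.1 (le_trans hy.2 hxγ.le)).sub continuous_id.continuousAt).continuousWithinAt
    have h0mem : (0:ℝ) ∈ Set.Icc (g x - x) (g 0 - 0) := by
      constructor <;> simp <;> linarith
    obtain ⟨s, hs, hs0⟩ := intermediate_value_Icc' hx0 hcφ h0mem
    simp only at hs0
    have hgs : g s = s := by linarith
    have := hleast s ⟨hs.1, by linarith [hs.2]⟩ hgs
    linarith [hs.2]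
  -- the sequence
  set x : ℕ → ℝ := fun t => g^[t] 0 with hxdef
  have hxsucc : ∀ t, x (t + 1) = g (x t) := by
    intro t; simp [hxdef, Function.iterate_succ_apply']
  have hxbound : ∀ t, 0 ≤ x t ∧ x t < γ := by
    intro t
    induction t with
    | zero => exact ⟨le_refl 0, hγ0⟩
    | succ n ih =>
      obtain ⟨h1', h2'⟩ := hstep (x n) ih.1 ih.2
      rw [hxsucc]
      exact ⟨le_trans ih.1 h1'.le, h2'⟩
  have hxmono : StrictMono x := by
    apply strictMono_nat_of_lt_succ
    intro n
    rw [hxsucc]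
    exact (hstep (x n) (hxbound n).1 (hxbound n).2).1
  -- limit of the sequence is γ
  have hbdd : BddAbove (Set.range x) := ⟨γ, by rintro y ⟨t, rfl⟩; exact (hxbound t).2.le⟩
  have hL : Tendsto x atTop (nhds (⨆ t, x t)) := tendsto_atTop_ciSup hxmono.monotone hbdd
  set L := ⨆ t, x t with hLdef
  have hLle : L ≤ γ := ciSup_le fun t => (hxbound t).2.le
  have hL0 : 0 ≤ L := le_trans (hxbound 0).1 (le_ciSup hbdd 0)
  have hgL : g L = L := by
    have h1' : Tendsto (fun t => x (t + 1)) atTop (nhds L) := hL.comp (tendsto_add_atTop_nat 1)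
    have h2' : Tendsto (fun t => g (x t)) atTop (nhds (g L)) :=
      ((hcont L hL0 hLle).tendsto).comp hL
    have : Tendsto (fun t => x (t + 1)) atTop (nhds (g L)) := by
      simpa only [hxsucc] using h2'
    exact tendsto_nhds_unique this h1'
  have hLγ : L = γ := le_antisymm hLle (hleast L ⟨hL0, le_trans hLle hγ1.le⟩ hgL)
  rw [hLγ] at hL
  -- key limit via L'Hôpital from the left
  have hderivg : AnalyticOnNhd ℝ (deriv g) (Metric.ball (0:ℝ) 1) := hanal'.deriv
  have hd2 : HasDerivAt (deriv g) b γ :=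
    ((hderivg γ hγball).differentiableAt).hasDerivAt
  have hslope : Tendsto (fun y => (deriv g y - 1) / (2 * (y - γ))) (nhdsWithin γ (Set.Iio γ))
      (nhds (b / 2)) := by
    have h1' : Tendsto (slope (deriv g) γ) (nhdsWithin γ {γ}ᶜ) (nhds b) :=
      hasDerivAt_iff_tendsto_slope.mp hd2
    have h2' : Tendsto (fun y => slope (deriv g) γ y / 2) (nhdsWithin γ {γ}ᶜ) (nhds (b / 2)) :=
      h1'.div_const 2
    have h3' : Tendsto (fun y => slope (deriv g) γ y / 2) (nhdsWithin γ (Set.Iio γ))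
        (nhds (b / 2)) :=
      h2'.mono_left (nhdsWithin_mono γ (fun y hy => ne_of_lt hy))
    refine h3'.congr' ?_
    filter_upwards [self_mem_nhdsWithin] with y hy
    have hyne : y - γ ≠ 0 := sub_ne_zero.2 (ne_of_lt hy)
    rw [slope_def_field, hd, div_div, mul_comm]
  have hkey : Tendsto (fun y => (g y - y) / (y - γ)^2) (nhdsWithin γ (Set.Iio γ))
      (nhds (b / 2)) := by
    have hev : ∀ᶠ y in nhdsWithin γ (Set.Iio γ), HasDerivAt (fun z => g z - z) (deriv g y - 1) y := by
      have : ∀ᶠ y in nhds γ, y ∈ Metric.ball (0:ℝ) 1 := hopen.mem_nhds hγball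
      filter_upwards [nhdsWithin_le_nhds this] with y hy
      exact ((hanal' y hy).differentiableAt.hasDerivAt).sub (hasDerivAt_id y)
    apply HasDerivAt.lhopital_zero_nhdsLT hev
    · filter_upwards with y
      have : HasDerivAt (fun z : ℝ => (z - γ)^2) (2 * (y - γ)) y := by
        have := ((hasDerivAt_id y).sub_const γ).fun_pow 2
        simpa [mul_comm] using this
      exact this
    · filter_upwards [self_mem_nhdsWithin] with y hy
      have : y - γ ≠ 0 := sub_ne_zero.2 (ne_of_lt hy)
      positivity
    · have hc : ContinuousAt (fun z => g z - z) γ := (hcont γ hγ0.le le_rfl).sub continuous_id.continuousAt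
      have := hc.tendsto
      rw [show g γ - γ = 0 by rw [hfix]; ring] at this
      exact this.mono_left nhdsWithin_le_nhds
    · have hc : ContinuousAt (fun z : ℝ => (z - γ)^2) γ := by fun_prop
      have := hc.tendsto
      rw [show (γ - γ)^2 = 0 by ring] at this
      exact this.mono_left nhdsWithin_le_nhds
    · exact hslope
  -- transfer to the sequence
  set ε : ℕ → ℝ := fun t => γ - x t with hεdef
  have hεpos : ∀ t, 0 < ε t := fun t => by simp [hεdef]; linarith [(hxbound t).2]
  have hε0 : Tendsto ε atTop (nhds 0) := by
    have := hL.const_sub γ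
    simpa using this
  have hxtend : Tendsto x atTop (nhdsWithin γ (Set.Iio γ)) := by
    apply tendsto_nhdsWithin_of_tendsto_nhds_of_eventually_within _ hL
    filter_upwards with t
    exact (hxbound t).2
  set D : ℕ → ℝ := fun t => (ε t - ε (t + 1)) / (ε t)^2 with hDdef
  have hDlim : Tendsto D atTop (nhds (b / 2)) := by
    have := hkey.comp hxtend
    refine this.congr ?_
    intro t
    simp only [Function.comp_apply, hDdef, hεdef, hxsucc]
    rw [show γ - x t - (γ - g (x t)) = g (x t) - x t by ring,
        show (x t - γ)^2 = (γ - x t)^2 by ring]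
  -- ratio tends to 1
  have hratio : Tendsto (fun t => ε (t + 1) / ε t) atTop (nhds 1) := by
    have h1' : Tendsto (fun t => D t * ε t) atTop (nhds 0) := by
      simpa using hDlim.mul hε0
    have h2' : Tendsto (fun t => 1 - D t * ε t) atTop (nhds 1) := by
      simpa using h1'.const_sub 1
    refine h2'.congr ?_
    intro t
    have h := (hεpos t).ne'
    simp only [hDdef]
    field_simp [hDdef]
    ring
  -- differences of inverses
  set u : ℕ → ℝ := fun t => (ε t)⁻¹ with hudef
  have hdiff : Tendsto (fun t => u (t + 1) - u t) atTop (nhds (b / 2)) := by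
    have h1' : Tendsto (fun t => D t / (ε (t + 1) / ε t)) atTop (nhds (b / 2)) := by
      have h := hDlim.div hratio one_ne_zero; rw [div_one] at h; exact h
    refine h1'.congr ?_
    intro t
    have ht := (hεpos t).ne'
    have ht1 := (hεpos (t + 1)).ne'
    simp only [hudef, hDdef]
    field_simp
  -- Cesàro
  have hcesaro : Tendsto (fun n : ℕ => (n⁻¹ : ℝ) * ∑ i ∈ Finset.range n, (u (i + 1) - u i))
      atTop (nhds (b / 2)) := hdiff.cesaro
  have hsum : ∀ n, ∑ i ∈ Finset.range n, (u (i + 1) - u i) = u n - u 0 :=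
    fun n => Finset.sum_range_sub u n
  have huovern : Tendsto (fun n : ℕ => u n / n) atTop (nhds (b / 2)) := by
    have h1' : Tendsto (fun n : ℕ => (n⁻¹ : ℝ) * (u n - u 0)) atTop (nhds (b / 2)) := by
      refine hcesaro.congr ?_
      intro n; rw [hsum]
    have h2' : Tendsto (fun n : ℕ => (n⁻¹ : ℝ) * u 0) atTop (nhds 0) := by
      simpa using ((tendsto_inv_atTop_nhds_zero_nat (𝕜 := ℝ)).mul_const (u 0))
    have := h1'.add h2'
    rw [add_zero] at this
    refine this.congr ?_
    intro n
    field_simp; ring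
  -- conclude
  have hb2 : (b / 2) ≠ 0 := by positivity
  have hnε : Tendsto (fun n : ℕ => (n : ℝ) * ε n) atTop (nhds (2 / b)) := by
    have h1' : Tendsto (fun n : ℕ => (u n / n)⁻¹) atTop (nhds ((b / 2)⁻¹)) :=
      huovern.inv₀ hb2
    have h2' : (b / 2)⁻¹ = 2 / b := by field_simp
    rw [h2'] at h1'
    refine h1'.congr' ?_
    filter_upwards [eventually_gt_atTop 0] with n hn
    have hnn : (n : ℝ) ≠ 0 := Nat.cast_ne_zero.2 hn.ne'
    have := (hεpos n).ne'
    simp only [hudef]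
    field_simp
  have hfinal := hnε.div_const γ
  have h2bγ : 2 / b / γ = 2 / (γ * b) := by
    field_simp
  rw [h2bγ] at hfinal
  exact hfinal
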